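/- arXiv:0910.2424 — 2 statements merged into one kernel-verified Lean document; each statement's English description precedes it below -/
import Mathlib

section
/- The 2×2 minors of the generic s × t matrix of indeterminates generate the homogeneous prime ideal of the Segre embedding of P^{s−1} × P^{t−1} in P^{st−1}. -/
noncomputable section

open MvPolynomial

/-- The ring map `k[x_{ij}] → k[a_1,…,a_s, b_1,…,b_t]` sending `x_{ij} ↦ a_i b_j`; its
kernel is the homogeneous (prime) ideal of the Segre embedding of
`P^{s−1} × P^{t−1}` in `P^{st−1}`. -/
def segreMap (k : Type) [Field k] (s t : ℕ) :
    MvPolynomial (Fin s × Fin t) k →ₐ[k] MvPolynomial (Fin s ⊕ Fin t) k :=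
  aeval (fun p => X (Sum.inl p.1) * X (Sum.inr p.2))

variable {s t : ℕ}

/-- the induced map on exponents -/
def segDeg (d : Fin s × Fin t →₀ ℕ) : Fin s ⊕ Fin t →₀ ℕ :=
  Finsupp.equivFunOnFinite.symm (fun e => Sum.rec (fun i => ∑ j : Fin t, d (i, j))
    (fun j => ∑ i : Fin s, d (i, j)) e)

@[simp] lemma segDeg_inl (d : Fin s × Fin t →₀ ℕ) (i : Fin s) :
    segDeg d (Sum.inl i) = ∑ j : Fin t, d (i, j) := rfl

@[simp] lemma segDeg_inr (d : Fin s × Fin t →₀ ℕ) (j : Fin t) :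
    segDeg d (Sum.inr j) = ∑ i : Fin s, d (i, j) := rfl

lemma segDeg_add (d e : Fin s × Fin t →₀ ℕ) : segDeg (d + e) = segDeg d + segDeg e := by
  ext x
  cases x <;> simp [Finset.sum_add_distrib]

lemma segDeg_single (i : Fin s) (j : Fin t) (n : ℕ) :
    segDeg (Finsupp.single (i, j) n)
      = Finsupp.single (Sum.inl i) n + Finsupp.single (Sum.inr j) n := by
  ext x
  cases x with
  | inl i' =>
      by_cases h : i = i' <;>
        simp [h, Finsupp.single_apply, Prod.mk.injEq, Finset.sum_ite_eq]
  | inr j' =>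
      by_cases h : j = j' <;>
        simp [h, Finsupp.single_apply, Prod.mk.injEq, Finset.sum_ite_eq]

lemma segDeg_eq_zero {d : Fin s × Fin t →₀ ℕ} (h : segDeg d = 0) : d = 0 := by
  ext p
  obtain ⟨p1, p2⟩ := p
  have := congrArg (fun f => f (Sum.inl p1)) h
  simp only [segDeg_inl, Finsupp.coe_zero, Pi.zero_apply] at this
  have h2 : d (p1, p2) ≤ ∑ j : Fin t, d (p1, j) :=
    Finset.single_le_sum (f := fun j => d (p1, j)) (fun j _ => Nat.zero_le _) (Finset.mem_univ p2)
  simp only [Finsupp.coe_zero, Pi.zero_apply]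
  omega

lemma segreMap_monomial {k : Type} [Field k] (d : Fin s × Fin t →₀ ℕ) (c : k) :
    segreMap k s t (monomial d c) = monomial (segDeg d) c := by
  induction d using Finsupp.induction generalizing c with
  | zero =>
      have : segDeg (0 : Fin s × Fin t →₀ ℕ) = 0 := by ext x; cases x <;> simp
      simp [segreMap, this, monomial_zero', aeval_C]
  | single_add p n d hpd hn ih =>
      obtain ⟨i, j⟩ := p
      have h1 : monomial (Finsupp.single (i,j) n + d) c
          = monomial (Finsupp.single (i,j) n) 1 * monomial d c := by
        rw [monomial_mul, one_mul]
      have h2 : (monomial (Finsupp.single (i,j) n) (1:k)) = X (i,j) ^ n := by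
        rw [X_pow_eq_monomial]
      rw [h1, map_mul, h2, map_pow, ih, segDeg_add, segDeg_single]
      have h3 : segreMap k s t (X (i,j)) = X (Sum.inl i) * X (Sum.inr j) := by
        simp [segreMap]
      rw [h3]
      rw [mul_pow, X_pow_eq_monomial, X_pow_eq_monomial, monomial_mul, monomial_mul,
        one_mul, one_mul]

lemma segDeg_zero : segDeg (0 : Fin s × Fin t →₀ ℕ) = 0 := by
  ext x; cases x <;> simp

def minorSet (k : Type) [Field k] (s t : ℕ) : Set (MvPolynomial (Fin s × Fin t) k) :=
  {q | ∃ (i i' : Fin s) (j j' : Fin t),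
    q = X (i, j) * X (i', j') - X (i, j') * X (i', j)}

lemma monomial_single_one' {k : Type} [Field k] (p : Fin s × Fin t) :
    monomial (Finsupp.single p 1) (1:k) = X p := by
  rw [← X_pow_eq_monomial, pow_one]

lemma swap_step {k : Type} [Field k] (i : Fin s) (j : Fin t) (d' : Fin s × Fin t →₀ ℕ)
    (hi : segDeg d' (Sum.inl i) ≠ 0) (hj : segDeg d' (Sum.inr j) ≠ 0) :
    ∃ d'' : Fin s × Fin t →₀ ℕ, d'' (i, j) ≠ 0 ∧ segDeg d'' = segDeg d' ∧
      monomial d'' (1:k) - monomial d' 1 ∈ Ideal.span (minorSet k s t) := by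
  by_cases hij : d' (i, j) ≠ 0
  · exact ⟨d', hij, rfl, by simp⟩
  push_neg at hij
  rw [segDeg_inl] at hi
  rw [segDeg_inr] at hj
  obtain ⟨j', -, hj'⟩ := Finset.exists_ne_zero_of_sum_ne_zero hi
  obtain ⟨i', -, hi'⟩ := Finset.exists_ne_zero_of_sum_ne_zero hj
  have hjj : j' ≠ j := fun h => hj' (h ▸ hij)
  have hii : i' ≠ i := fun h => hi' (h ▸ hij)
  set c : Fin s × Fin t →₀ ℕ := d' - Finsupp.single (i, j') 1 - Finsupp.single (i', j) 1 with hc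
  have hd' : d' = c + Finsupp.single (i, j') 1 + Finsupp.single (i', j) 1 := by
    ext ⟨p1, p2⟩
    have e1 : 1 ≤ d' (i, j') := Nat.one_le_iff_ne_zero.2 hj'
    have e2 : 1 ≤ d' (i', j) := Nat.one_le_iff_ne_zero.2 hi'
    simp only [hc, Finsupp.add_apply, Finsupp.tsub_apply, Finsupp.single_apply, Prod.mk.injEq]
    split_ifs with h1 h2 h2
    · exact absurd (h2.1.trans h1.1.symm) hii
    · obtain ⟨rfl, rfl⟩ := h1; omega
    · obtain ⟨rfl, rfl⟩ := h2; omega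
    · omega
  refine ⟨c + Finsupp.single (i, j) 1 + Finsupp.single (i', j') 1, ?_, ?_, ?_⟩
  · simp [Finsupp.single_apply, Prod.ext_iff, hii]
  · rw [hd']
    simp only [segDeg_add, segDeg_single]
    abel
  · have key : monomial (c + Finsupp.single (i, j) 1 + Finsupp.single (i', j') 1) (1:k)
        - monomial d' 1
        = monomial c 1 * (X (i, j) * X (i', j') - X (i, j') * X (i', j)) := by
      rw [hd', ← monomial_single_one' (i, j), ← monomial_single_one' (i', j'),
        ← monomial_single_one' (i, j'), ← monomial_single_one' (i', j), mul_sub]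
      simp [monomial_mul, add_assoc]
    rw [key]
    exact Ideal.mul_mem_left _ _ (Ideal.subset_span ⟨i, i', j, j', rfl⟩)

lemma sum_single_univ (p : Fin s × Fin t) :
    (∑ q : Fin s × Fin t, (Finsupp.single p 1 : Fin s × Fin t →₀ ℕ) q) = 1 := by
  simp [Finsupp.single_apply, Finset.sum_ite_eq]

lemma key_congr {k : Type} [Field k] :
    ∀ (n : ℕ) (d d' : Fin s × Fin t →₀ ℕ), (∑ p : Fin s × Fin t, d p) = n →
      segDeg d = segDeg d' →
      monomial d (1:k) - monomial d' 1 ∈ Ideal.span (minorSet k s t) := by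
  intro n
  induction n using Nat.strong_induction_on with
  | _ n ih =>
    intro d d' hn hseg
    by_cases hd : d = 0
    · subst hd
      rw [segDeg_zero] at hseg
      rw [segDeg_eq_zero hseg.symm]
      simp
    · -- pick (i, j) in the support of d
      obtain ⟨⟨i, j⟩, hij⟩ : ∃ p, d p ≠ 0 := by
        by_contra h
        push_neg at h
        exact hd (Finsupp.ext h)
      have hdi : segDeg d (Sum.inl i) ≠ 0 := by
        rw [segDeg_inl]
        intro h
        exact hij (by
          have := Finset.sum_eq_zero_iff.mp h j (Finset.mem_univ j)
          simpa using this)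
      have hdj : segDeg d (Sum.inr j) ≠ 0 := by
        rw [segDeg_inr]
        intro h
        exact hij (by
          have := Finset.sum_eq_zero_iff.mp h i (Finset.mem_univ i)
          simpa using this)
      obtain ⟨d'', hd''ij, hd''seg, hd''mem⟩ :=
        swap_step (k := k) i j d' (hseg ▸ hdi) (hseg ▸ hdj)
      -- strip one copy of X (i, j) from both d and d''
      set e : Fin s × Fin t →₀ ℕ := d - Finsupp.single (i, j) 1 with he
      set c : Fin s × Fin t →₀ ℕ := d'' - Finsupp.single (i, j) 1 with hcc
      have hde : d = e + Finsupp.single (i, j) 1 := by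
        ext ⟨p1, p2⟩
        have : 1 ≤ d (i, j) := Nat.one_le_iff_ne_zero.2 hij
        simp only [he, Finsupp.add_apply, Finsupp.tsub_apply, Finsupp.single_apply,
          Prod.mk.injEq]
        split_ifs with h1
        · obtain ⟨rfl, rfl⟩ := h1; omega
        · omega
      have hdc : d'' = c + Finsupp.single (i, j) 1 := by
        ext ⟨p1, p2⟩
        have : 1 ≤ d'' (i, j) := Nat.one_le_iff_ne_zero.2 hd''ij
        simp only [hcc, Finsupp.add_apply, Finsupp.tsub_apply, Finsupp.single_apply,
          Prod.mk.injEq]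
        split_ifs with h1
        · obtain ⟨rfl, rfl⟩ := h1; omega
        · omega
      have hsegec : segDeg e = segDeg c := by
        have h1 : segDeg d = segDeg d'' := hseg.trans hd''seg.symm
        rw [hde, hdc, segDeg_add, segDeg_add] at h1
        exact add_right_cancel h1
      have hm : (∑ p : Fin s × Fin t, e p) < n := by
        have h1 : (∑ p : Fin s × Fin t, d p)
            = (∑ p : Fin s × Fin t, e p) + 1 := by
          rw [hde]
          simp only [Finsupp.add_apply]
          rw [Finset.sum_add_distrib, sum_single_univ]
        omega
      have hmem : monomial e (1:k) - monomial c 1 ∈ Ideal.span (minorSet k s t) :=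
        ih _ hm e c rfl hsegec
      have step1 : monomial d (1:k) - monomial d'' 1
          = X (i, j) * (monomial e 1 - monomial c 1) := by
        rw [hde, hdc, ← monomial_single_one' (i, j), mul_sub]
        simp [monomial_mul, add_comm]
      have step1mem : monomial d (1:k) - monomial d'' 1 ∈ Ideal.span (minorSet k s t) := by
        rw [step1]
        exact Ideal.mul_mem_left _ _ hmem
      have : monomial d (1:k) - monomial d' 1
          = (monomial d 1 - monomial d'' 1) + (monomial d'' 1 - monomial d' 1) := by ring
      rw [this]
      exact Ideal.add_mem _ step1mem hd''mem

open Classical in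
def rho (s t : ℕ) : (Fin s ⊕ Fin t →₀ ℕ) → (Fin s × Fin t →₀ ℕ) :=
  fun E => if h : ∃ d, segDeg d = E then h.choose else 0

lemma rho_spec (d : Fin s × Fin t →₀ ℕ) : segDeg (rho s t (segDeg d)) = segDeg d := by
  have h : ∃ d', segDeg d' = segDeg d := ⟨d, rfl⟩
  rw [rho, dif_pos h]
  exact h.choose_spec

lemma coeff_segreMap {k : Type} [Field k] (f : MvPolynomial (Fin s × Fin t) k)
    (E : Fin s ⊕ Fin t →₀ ℕ) :
    coeff E (segreMap k s t f)
      = ∑ d ∈ f.support.filter (fun d => segDeg d = E), coeff d f := by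
  conv_lhs => rw [f.as_sum]
  rw [map_sum]
  simp only [segreMap_monomial]
  rw [MvPolynomial.coeff_sum]
  simp only [coeff_monomial]
  rw [Finset.sum_filter]

theorem segre_ideal_eq_minors' (k : Type) [Field k] (s t : ℕ) :
    RingHom.ker (segreMap k s t).toRingHom = Ideal.span (minorSet k s t) := by
  apply le_antisymm
  · -- ker ⊆ span
    intro f hf
    rw [RingHom.mem_ker] at hf
    have hf' : segreMap k s t f = 0 := hf
    have hcoeff : ∀ E, ∑ d ∈ f.support.filter (fun d => segDeg d = E), coeff d f = 0 := by
      intro E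
      rw [← coeff_segreMap, hf', coeff_zero]
    -- decompose f
    have hdecomp : f = (∑ d ∈ f.support,
          (monomial d (coeff d f) - monomial (rho s t (segDeg d)) (coeff d f)))
        + ∑ d ∈ f.support, monomial (rho s t (segDeg d)) (coeff d f) := by
      rw [Finset.sum_sub_distrib]
      rw [sub_add_cancel]
      exact f.as_sum
    have hB : (∑ d ∈ f.support, monomial (rho s t (segDeg d)) (coeff d f)) = 0 := by
      rw [← Finset.sum_fiberwise_of_maps_to (g := fun d => segDeg d)
        (t := f.support.image (fun d => segDeg d)) (fun d hd => Finset.mem_image_of_mem _ hd)]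
      apply Finset.sum_eq_zero
      intro E hE
      have : ∑ d ∈ f.support.filter (fun d => segDeg d = E),
          monomial (rho s t (segDeg d)) (coeff d f)
          = ∑ d ∈ f.support.filter (fun d => segDeg d = E),
            monomial (rho s t E) (coeff d f) := by
        apply Finset.sum_congr rfl
        intro d hd
        rw [(Finset.mem_filter.mp hd).2]
      rw [this, ← map_sum, hcoeff E, map_zero]
    rw [hdecomp, hB, add_zero]
    apply Ideal.sum_mem
    intro d hd
    have h1 : monomial d (coeff d f) - monomial (rho s t (segDeg d)) (coeff d f)
        = C (coeff d f) * (monomial d 1 - monomial (rho s t (segDeg d)) 1) := by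
      rw [mul_sub, C_mul_monomial, C_mul_monomial, mul_one]
    rw [h1]
    exact Ideal.mul_mem_left _ _ (key_congr _ d _ rfl (rho_spec d).symm)
  · -- span ⊆ ker
    rw [Ideal.span_le]
    rintro q ⟨i, i', j, j', rfl⟩
    simp only [SetLike.mem_coe, RingHom.mem_ker]
    show segreMap k s t _ = 0
    simp only [map_sub, map_mul]
    simp only [segreMap, aeval_X]
    ring


/-- The `2 × 2` minors of the generic `s × t` matrix of indeterminates
`(x_{ij})` generate the homogeneous prime ideal of the Segre embedding of
`P^{s−1} × P^{t−1}` in `P^{st−1}`. -/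
theorem segre_ideal_eq_minors (k : Type) [Field k] (s t : ℕ) :
    RingHom.ker (segreMap k s t).toRingHom =
      Ideal.span {q : MvPolynomial (Fin s × Fin t) k |
        ∃ (i i' : Fin s) (j j' : Fin t),
          q = X (i, j) * X (i', j') - X (i, j') * X (i', j)} := by
  exact segre_ideal_eq_minors' k s t

end
end

section
/- Let X = P¹ × P¹ × P¹ with total coordinate ring k[x_{1,0},x_{1,1},x_{2,0},x_{2,1},x_{3,0},x_{3,1}], embedded in P¹¹ by the 12 monomials of multidegree (2,1,1). Then the toric ideal of this embedding is generated by the 2×2 minors of the 4×4 matrix [[y₀,y₁,y₄,y₅],[y₂,y₃,y₆,y₇],[y₄,y₅,y₈,y₉],[y₆,y₇,y₁₀,y₁₁]]; in particular O_X(2,1,1) is determinantally presented. -/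
noncomputable section

open MvPolynomial

/-- The six Cox-ring variables of `X = P¹ × P¹ × P¹`:
`0 ↦ x_{1,0}, 1 ↦ x_{1,1}, 2 ↦ x_{2,0}, 3 ↦ x_{2,1}, 4 ↦ x_{3,0}, 5 ↦ x_{3,1}`,
and the twelve monomials of multidegree `(2,1,1)` in the order of the paper. -/
def mon211 (k : Type) [Field k] : Fin 12 → MvPolynomial (Fin 6) k :=
  ![X 0 ^ 2 * X 2 * X 4, X 0 ^ 2 * X 2 * X 5, X 0 ^ 2 * X 3 * X 4, X 0 ^ 2 * X 3 * X 5,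
    X 0 * X 1 * X 2 * X 4, X 0 * X 1 * X 2 * X 5, X 0 * X 1 * X 3 * X 4,
    X 0 * X 1 * X 3 * X 5,
    X 1 ^ 2 * X 2 * X 4, X 1 ^ 2 * X 2 * X 5, X 1 ^ 2 * X 3 * X 4, X 1 ^ 2 * X 3 * X 5]

/-- The ring map `k[y₀,…,y₁₁] → k[x_{1,0},…,x_{3,1}]` sending `y_i` to the `i`-th
monomial of multidegree `(2,1,1)`; its kernel is the toric ideal of the embedding of
`P¹ × P¹ × P¹` in `P¹¹` by `|O_X(2,1,1)|`. -/
def embed211 (k : Type) [Field k] : MvPolynomial (Fin 12) k →ₐ[k] MvPolynomial (Fin 6) k :=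
  aeval (mon211 k)

/-- The index matrix of the `4 × 4` matrix
`[[y₀,y₁,y₄,y₅],[y₂,y₃,y₆,y₇],[y₄,y₅,y₈,y₉],[y₆,y₇,y₁₀,y₁₁]]` arising from the
factorization `O_X(2,1,1) = O_X(1,1,0) ⊗ O_X(1,0,1)`. -/
def omegaIdx : Fin 4 → Fin 4 → Fin 12 :=
  ![![0, 1, 4, 5], ![2, 3, 6, 7], ![4, 5, 8, 9], ![6, 7, 10, 11]]


def ω (i j : Fin 4) : Fin 12 := ⟨4*(i.val/2 + j.val/2) + 2*(i.val%2) + j.val%2, by omega⟩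

lemma omega_eq : omegaIdx = ω := by decide

def av (f : Fin 12) : ℕ := f.val / 4
def bv (f : Fin 12) : ℕ := f.val / 2 % 2
def cv (f : Fin 12) : ℕ := f.val % 2
def idx (a b c : ℕ) : Fin 12 := ⟨(4*a + 2*b + c) % 12, Nat.mod_lt _ (by omega)⟩

lemma idx_eq : ∀ f : Fin 12, idx (av f) (bv f) (cv f) = f := by decide

lemma av_idx {a b c : ℕ} (ha : a ≤ 2) (hb : b ≤ 1) (hc : c ≤ 1) : av (idx a b c) = a := by
  unfold av idx; simp only; omega
lemma bv_idx {a b c : ℕ} (ha : a ≤ 2) (hb : b ≤ 1) (hc : c ≤ 1) : bv (idx a b c) = b := by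
  unfold bv idx; simp only; omega
lemma cv_idx {a b c : ℕ} (ha : a ≤ 2) (hb : b ≤ 1) (hc : c ≤ 1) : cv (idx a b c) = c := by
  unfold cv idx; simp only; omega

lemma av_le (f : Fin 12) : av f ≤ 2 := by have := f.isLt; unfold av; omega
lemma bv_le (f : Fin 12) : bv f ≤ 1 := by unfold bv; omega
lemma cv_le (f : Fin 12) : cv f ≤ 1 := by unfold cv; omega

-- step invariance
lemma step_av : ∀ i i' j j' : Fin 4,
    av (ω i j) + av (ω i' j') = av (ω i j') + av (ω i' j) := by decide
lemma step_bv : ∀ i i' j j' : Fin 4,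
    bv (ω i j) + bv (ω i' j') = bv (ω i j') + bv (ω i' j) := by decide
lemma step_cv : ∀ i i' j j' : Fin 4,
    cv (ω i j) + cv (ω i' j') = cv (ω i j') + cv (ω i' j) := by decide

-- pair reachability
def lifts (f : Fin 12) : List (Fin 4 × Fin 4) :=
  ((List.finRange 4).product (List.finRange 4)).filter (fun p => ω p.1 p.2 = f)

def succs (p : Fin 12 × Fin 12) : List (Fin 12 × Fin 12) :=
  (p.2, p.1) :: (((lifts p.1).product (lifts p.2)).map
    (fun q => (ω q.1.1 q.2.2, ω q.2.1 q.1.2)))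

def ReachN : ℕ → Fin 12 × Fin 12 → Fin 12 × Fin 12 → Prop
  | 0, p, q => p = q
  | n+1, p, q => p = q ∨ ∃ x ∈ succs p, ReachN n x q

instance : ∀ n p q, Decidable (ReachN n p q)
  | 0, p, q => by unfold ReachN; infer_instance
  | n+1, p, q => by
      unfold ReachN
      have : ∀ x, Decidable (ReachN n x q) := fun x => instDecidableReachN n x q
      exact @instDecidableOr _ _ _ (@List.decidableBEx _ _ (fun x => this x) _)

-- the three key pair lemmas
lemma bswap_reach : ∀ f g : Fin 12,
    ReachN 4 (f, g) (idx (av f) (bv g) (cv f), idx (av g) (bv f) (cv g)) := by decide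

lemma cswap_reach : ∀ f g : Fin 12,
    ReachN 4 (f, g) (idx (av f) (bv f) (cv g), idx (av g) (bv g) (cv f)) := by decide

lemma combine_reach : ∀ f g : Fin 12, av f = 1 → av g = 1 →
    ReachN 4 (f, g) (idx 2 (bv f) (cv g), idx 0 (bv g) (cv f)) := by decide
-- multiset step
def Stp (m₁ m₂ : Multiset (Fin 12)) : Prop :=
  ∃ r i i' j j', m₁ = ω i j ::ₘ ω i' j' ::ₘ r ∧ m₂ = ω i j' ::ₘ ω i' j ::ₘ r

def Eqv : Multiset (Fin 12) → Multiset (Fin 12) → Prop := Relation.ReflTransGen Stp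

lemma Eqv.refl (m) : Eqv m m := Relation.ReflTransGen.refl
lemma Eqv.trans {a b c} (h : Eqv a b) (h' : Eqv b c) : Eqv a c := Relation.ReflTransGen.trans h h'
lemma Stp.symm {a b} (h : Stp a b) : Stp b a := by
  obtain ⟨r, i, i', j, j', h1, h2⟩ := h
  exact ⟨r, i, i', j', j, h2, h1⟩
lemma Eqv.symm {a b} (h : Eqv a b) : Eqv b a := by
  induction h with
  | refl => exact Eqv.refl _
  | tail hab hbc ih => exact Eqv.trans (Relation.ReflTransGen.single hbc.symm) ih
lemma Stp.cons {a b} (x : Fin 12) (h : Stp a b) : Stp (x ::ₘ a) (x ::ₘ b) := by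
  obtain ⟨r, i, i', j, j', h1, h2⟩ := h
  subst h1 h2
  refine ⟨x ::ₘ r, i, i', j, j', ?_, ?_⟩ <;>
    rw [Multiset.cons_swap x, Multiset.cons_swap x (ω i' _)]
lemma Eqv.cons {a b} (x : Fin 12) (h : Eqv a b) : Eqv (x ::ₘ a) (x ::ₘ b) := by
  induction h with
  | refl => exact Eqv.refl _
  | tail hab hbc ih => exact ih.trans (Relation.ReflTransGen.single (hbc.cons x))

lemma mem_lifts {f : Fin 12} {p : Fin 4 × Fin 4} (h : p ∈ lifts f) : ω p.1 p.2 = f := by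
  simpa [lifts, List.mem_filter] using (List.mem_filter.mp h).2

lemma succs_sound {p x : Fin 12 × Fin 12} (h : x ∈ succs p) (r : Multiset (Fin 12)) :
    Eqv (p.1 ::ₘ p.2 ::ₘ r) (x.1 ::ₘ x.2 ::ₘ r) := by
  rcases List.mem_cons.mp h with h | h
  · subst h; rw [Multiset.cons_swap]; exact Eqv.refl _
  · obtain ⟨q, hq, rfl⟩ := List.mem_map.mp h
    have h1 := mem_lifts (List.mem_product.mp hq).1
    have h2 := mem_lifts (List.mem_product.mp hq).2
    exact Relation.ReflTransGen.single
      ⟨r, q.1.1, q.2.1, q.1.2, q.2.2, by rw [h1, h2], rfl⟩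

lemma reachN_sound : ∀ n {p x : Fin 12 × Fin 12}, ReachN n p x →
    ∀ r, Eqv (p.1 ::ₘ p.2 ::ₘ r) (x.1 ::ₘ x.2 ::ₘ r) := by
  intro n
  induction n with
  | zero => intro p x h r; cases h; exact Eqv.refl _
  | succ n ih =>
    intro p x h r
    rcases h with h | ⟨y, hy, hr⟩
    · cases h; exact Eqv.refl _
    · exact (succs_sound hy r).trans (ih hr r)

def As (m : Multiset (Fin 12)) : ℕ := (m.map av).sum
def Bs (m : Multiset (Fin 12)) : ℕ := (m.map bv).sum
def Cs (m : Multiset (Fin 12)) : ℕ := (m.map cv).sum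

lemma As_cons (f : Fin 12) (r : Multiset (Fin 12)) : As (f ::ₘ r) = av f + As r := by
  simp [As]
lemma Bs_cons (f : Fin 12) (r : Multiset (Fin 12)) : Bs (f ::ₘ r) = bv f + Bs r := by
  simp [Bs]
lemma Cs_cons (f : Fin 12) (r : Multiset (Fin 12)) : Cs (f ::ₘ r) = cv f + Cs r := by
  simp [Cs]

lemma Stp.inv {m₁ m₂} (h : Stp m₁ m₂) :
    Multiset.card m₁ = Multiset.card m₂ ∧ As m₁ = As m₂ ∧ Bs m₁ = Bs m₂ ∧ Cs m₁ = Cs m₂ := by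
  obtain ⟨r, i, i', j, j', rfl, rfl⟩ := h
  refine ⟨by simp, ?_, ?_, ?_⟩
  · have := step_av i i' j j'; simp only [As_cons]; omega
  · have := step_bv i i' j j'; simp only [Bs_cons]; omega
  · have := step_cv i i' j j'; simp only [Cs_cons]; omega

lemma Eqv.inv {m₁ m₂} (h : Eqv m₁ m₂) :
    Multiset.card m₁ = Multiset.card m₂ ∧ As m₁ = As m₂ ∧ Bs m₁ = Bs m₂ ∧ Cs m₁ = Cs m₂ := by
  induction h with
  | refl => exact ⟨rfl, rfl, rfl, rfl⟩
  | tail hab hbc ih =>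
    obtain ⟨h1, h2, h3, h4⟩ := ih
    obtain ⟨g1, g2, g3, g4⟩ := hbc.inv
    exact ⟨h1.trans g1, h2.trans g2, h3.trans g3, h4.trans g4⟩

lemma exists_pos {h : Fin 12 → ℕ} : ∀ {m : Multiset (Fin 12)}, 0 < (m.map h).sum →
    ∃ f r, m = f ::ₘ r ∧ 0 < h f := by
  intro m
  induction m using Multiset.induction_on with
  | empty => simp
  | cons a s ih =>
    intro hsum
    by_cases ha : 0 < h a
    · exact ⟨a, s, rfl, ha⟩
    · have : 0 < (s.map h).sum := by simp at hsum ⊢; omega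
      obtain ⟨f, r, rfl, hf⟩ := ih this
      exact ⟨f, a ::ₘ r, Multiset.cons_swap a f r, hf⟩

lemma phase1 (m : Multiset (Fin 12)) (hm : 0 < Multiset.card m) :
    ∃ f r, Eqv m (f ::ₘ r) ∧ av f = min 2 (As m) := by
  rcases Nat.lt_or_ge (As m) 2 with hA | hA
  · rcases Nat.eq_zero_or_pos (As m) with h0 | h1
    · obtain ⟨g, hg⟩ := Multiset.card_pos_iff_exists_mem.mp hm
      obtain ⟨r, rfl⟩ := Multiset.exists_cons_of_mem hg
      refine ⟨g, r, Eqv.refl _, ?_⟩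
      have := As_cons g r; omega
    · obtain ⟨f, r', rfl, hf⟩ := exists_pos (show 0 < (Multiset.map av m).sum from h1)
      refine ⟨f, r', Eqv.refl _, ?_⟩
      have := As_cons f r'; omega
  · by_cases h2 : ∃ g ∈ m, av g = 2
    · obtain ⟨g, hg, hg2⟩ := h2
      obtain ⟨r, rfl⟩ := Multiset.exists_cons_of_mem hg
      exact ⟨g, r, Eqv.refl _, by omega⟩
    · push_neg at h2
      obtain ⟨f, r, rfl, hf⟩ :=
        exists_pos (show 0 < (Multiset.map av m).sum by unfold As at hA; omega)
      have hf1 : av f = 1 := by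
        have := av_le f
        have := h2 f (Multiset.mem_cons_self f r)
        omega
      have hAr : 0 < (r.map av).sum := by
        have := As_cons f r; unfold As at *; omega
      obtain ⟨g, r', rfl, hg⟩ := exists_pos hAr
      have hg1 : av g = 1 := by
        have := av_le g
        have := h2 g (Multiset.mem_cons_of_mem (Multiset.mem_cons_self g r'))
        omega
      have hre := reachN_sound 4 (combine_reach f g hf1 hg1) r'
      refine ⟨idx 2 (bv f) (cv g), idx 0 (bv g) (cv f) ::ₘ r', hre, ?_⟩
      rw [av_idx (by omega) (bv_le f) (cv_le g)]
      omega

lemma head_lemma (m : Multiset (Fin 12)) (hm : 0 < Multiset.card m) :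
    ∃ r, Eqv m (idx (min 2 (As m)) (min 1 (Bs m)) (min 1 (Cs m)) ::ₘ r) := by
  obtain ⟨f, r, hfr, hf⟩ := phase1 m hm
  -- Phase 2: fix b
  obtain ⟨f₂, r₂, hfr₂, ha₂, hb₂⟩ :
      ∃ f₂ r₂, Eqv m (f₂ ::ₘ r₂) ∧ av f₂ = min 2 (As m) ∧ bv f₂ = min 1 (Bs m) := by
    have hBm : Bs (f ::ₘ r) = Bs m := (hfr.inv).2.2.1.symm
    by_cases hb : bv f = min 1 (Bs m)
    · exact ⟨f, r, hfr, hf, hb⟩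
    · have hbf : bv f = 0 := by
        have := bv_le f
        have := Bs_cons f r
        omega
      have hB1 : 0 < Bs m := by omega
      have hBr : 0 < (r.map bv).sum := by
        have := Bs_cons f r; unfold Bs at *; omega
      obtain ⟨g, r', rfl, hg⟩ := exists_pos hBr
      have hg1 : bv g = 1 := by have := bv_le g; omega
      have hre := reachN_sound 4 (bswap_reach f g) r'
      refine ⟨idx (av f) (bv g) (cv f), idx (av g) (bv f) (cv g) ::ₘ r',
        hfr.trans hre, ?_, ?_⟩
      · rw [av_idx (av_le f) (bv_le g) (cv_le f)]; exact hf
      · rw [bv_idx (av_le f) (bv_le g) (cv_le f), hg1]; omega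
  -- Phase 3: fix c
  obtain ⟨f₃, r₃, hfr₃, ha₃, hb₃, hc₃⟩ :
      ∃ f₃ r₃, Eqv m (f₃ ::ₘ r₃) ∧ av f₃ = min 2 (As m) ∧ bv f₃ = min 1 (Bs m) ∧
        cv f₃ = min 1 (Cs m) := by
    have hCm : Cs (f₂ ::ₘ r₂) = Cs m := (hfr₂.inv).2.2.2.symm
    by_cases hc : cv f₂ = min 1 (Cs m)
    · exact ⟨f₂, r₂, hfr₂, ha₂, hb₂, hc⟩
    · have hcf : cv f₂ = 0 := by
        have := cv_le f₂
        have := Cs_cons f₂ r₂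
        omega
      have hC1 : 0 < Cs m := by omega
      have hCr : 0 < (r₂.map cv).sum := by
        have := Cs_cons f₂ r₂; unfold Cs at *; omega
      obtain ⟨g, r', rfl, hg⟩ := exists_pos hCr
      have hg1 : cv g = 1 := by have := cv_le g; omega
      have hre := reachN_sound 4 (cswap_reach f₂ g) r'
      refine ⟨idx (av f₂) (bv f₂) (cv g), idx (av g) (bv g) (cv f₂) ::ₘ r',
        hfr₂.trans hre, ?_, ?_, ?_⟩
      · rw [av_idx (av_le f₂) (bv_le f₂) (cv_le g)]; exact ha₂
      · rw [bv_idx (av_le f₂) (bv_le f₂) (cv_le g)]; exact hb₂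
      · rw [cv_idx (av_le f₂) (bv_le f₂) (cv_le g), hg1]; omega
  refine ⟨r₃, ?_⟩
  have : idx (min 2 (As m)) (min 1 (Bs m)) (min 1 (Cs m)) = f₃ := by
    rw [← ha₃, ← hb₃, ← hc₃, idx_eq f₃]
  rw [this]; exact hfr₃

def can : ℕ → ℕ → ℕ → ℕ → Multiset (Fin 12)
  | 0, _, _, _ => 0
  | d+1, A, B, C =>
      idx (min 2 A) (min 1 B) (min 1 C) ::ₘ
        can d (A - min 2 A) (B - min 1 B) (C - min 1 C)

lemma reach : ∀ (d : ℕ) (m : Multiset (Fin 12)), Multiset.card m = d →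
    Eqv m (can d (As m) (Bs m) (Cs m)) := by
  intro d
  induction d with
  | zero =>
    intro m hm
    rw [Multiset.card_eq_zero.mp hm]
    exact Eqv.refl _
  | succ d ih =>
    intro m hm
    obtain ⟨r, hr⟩ := head_lemma m (by omega)
    set e := idx (min 2 (As m)) (min 1 (Bs m)) (min 1 (Cs m)) with he
    have hinv := hr.inv
    have hae : av e = min 2 (As m) := av_idx (by omega) (by omega) (by omega)
    have hbe : bv e = min 1 (Bs m) := bv_idx (by omega) (by omega) (by omega)
    have hce : cv e = min 1 (Cs m) := cv_idx (by omega) (by omega) (by omega)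
    have hcr : Multiset.card r = d := by
      have := hinv.1; simp at this; omega
    have hAr : As r = As m - min 2 (As m) := by
      have := hinv.2.1; rw [As_cons] at this; omega
    have hBr : Bs r = Bs m - min 1 (Bs m) := by
      have := hinv.2.2.1; rw [Bs_cons] at this; omega
    have hCr : Cs r = Cs m - min 1 (Cs m) := by
      have := hinv.2.2.2; rw [Cs_cons] at this; omega
    have := (ih r hcr)
    rw [hAr, hBr, hCr] at this
    exact hr.trans ((this.cons e).trans (Eqv.refl _))

-- ALGEBRA SIDE
variable {k : Type} [Field k]

lemma fv (n m : ℕ) [NeZero m] :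
    ((no_index (OfNat.ofNat n) : Fin m) : ℕ) = OfNat.ofNat n % m := rfl

def vexp (f : Fin 12) : Fin 6 →₀ ℕ :=
  Finsupp.single 0 (2 - av f) + Finsupp.single 1 (av f) + Finsupp.single 2 (1 - bv f) +
  Finsupp.single 3 (bv f) + Finsupp.single 4 (1 - cv f) + Finsupp.single 5 (cv f)

lemma mon211_eq (f : Fin 12) : mon211 k f = monomial (vexp f) 1 := by
  fin_cases f <;>
    simp [mon211, Matrix.cons_val_succ, vexp, av, bv, cv, fv, X, monomial_pow, monomial_mul,
      Finsupp.smul_single] <;>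
    rfl

lemma vexp_apply0 (f : Fin 12) : vexp f 0 = 2 - av f := by simp [vexp, Finsupp.single_apply]
lemma vexp_apply1 (f : Fin 12) : vexp f 1 = av f := by simp [vexp, Finsupp.single_apply]
lemma vexp_apply2 (f : Fin 12) : vexp f 2 = 1 - bv f := by simp [vexp, Finsupp.single_apply]
lemma vexp_apply3 (f : Fin 12) : vexp f 3 = bv f := by simp [vexp, Finsupp.single_apply]
lemma vexp_apply4 (f : Fin 12) : vexp f 4 = 1 - cv f := by simp [vexp, Finsupp.single_apply]
lemma vexp_apply5 (f : Fin 12) : vexp f 5 = cv f := by simp [vexp, Finsupp.single_apply]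

lemma vexp_pair (f g : Fin 12) : vexp f + vexp g =
    Finsupp.single 0 (4 - (av f + av g)) + Finsupp.single 1 (av f + av g) +
    Finsupp.single 2 (2 - (bv f + bv g)) + Finsupp.single 3 (bv f + bv g) +
    Finsupp.single 4 (2 - (cv f + cv g)) + Finsupp.single 5 (cv f + cv g) := by
  have h0 : 4 - (av f + av g) = (2 - av f) + (2 - av g) := by
    have := av_le f; have := av_le g; omega
  have h2 : 2 - (bv f + bv g) = (1 - bv f) + (1 - bv g) := by
    have := bv_le f; have := bv_le g; omega
  have h4 : 2 - (cv f + cv g) = (1 - cv f) + (1 - cv g) := by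
    have := cv_le f; have := cv_le g; omega
  rw [h0, h2, h4, vexp, vexp]
  simp only [Finsupp.single_add]
  abel

lemma vexp_swap (i i' j j' : Fin 4) :
    vexp (ω i j) + vexp (ω i' j') = vexp (ω i j') + vexp (ω i' j) := by
  rw [vexp_pair, vexp_pair, step_av, step_bv, step_cv]

def P (k : Type) [Field k] (m : Multiset (Fin 12)) : MvPolynomial (Fin 12) k :=
  (m.map X).prod

lemma P_zero : P k 0 = 1 := by simp [P]
lemma P_cons (f : Fin 12) (m : Multiset (Fin 12)) : P k (f ::ₘ m) = X f * P k m := by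
  simp [P]

def Vsum (m : Multiset (Fin 12)) : Fin 6 →₀ ℕ := (m.map vexp).sum

lemma Vsum_zero : Vsum 0 = 0 := by simp [Vsum]
lemma Vsum_cons (f : Fin 12) (m : Multiset (Fin 12)) :
    Vsum (f ::ₘ m) = vexp f + Vsum m := by simp [Vsum]

lemma aeval_P (m : Multiset (Fin 12)) :
    embed211 k (P k m) = monomial (Vsum m) 1 := by
  induction m using Multiset.induction_on with
  | empty => simp [P_zero, Vsum_zero, embed211]
  | cons f s ih =>
    rw [P_cons, map_mul, ih, Vsum_cons]
    have : embed211 k (X f) = mon211 k f := aeval_X _ f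
    rw [this, mon211_eq, monomial_mul, one_mul]

lemma Vsum_1 (m : Multiset (Fin 12)) : Vsum m 1 = As m := by
  induction m using Multiset.induction_on with
  | empty => simp [Vsum_zero, As]
  | cons f s ih => rw [Vsum_cons, Finsupp.add_apply, vexp_apply1, ih, As_cons]

lemma Vsum_3 (m : Multiset (Fin 12)) : Vsum m 3 = Bs m := by
  induction m using Multiset.induction_on with
  | empty => simp [Vsum_zero, Bs]
  | cons f s ih => rw [Vsum_cons, Finsupp.add_apply, vexp_apply3, ih, Bs_cons]

lemma Vsum_5 (m : Multiset (Fin 12)) : Vsum m 5 = Cs m := by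
  induction m using Multiset.induction_on with
  | empty => simp [Vsum_zero, Cs]
  | cons f s ih => rw [Vsum_cons, Finsupp.add_apply, vexp_apply5, ih, Cs_cons]

lemma Vsum_card (m : Multiset (Fin 12)) : Vsum m 2 + Vsum m 3 = Multiset.card m := by
  induction m using Multiset.induction_on with
  | empty => simp [Vsum_zero]
  | cons f s ih =>
    rw [Vsum_cons, Finsupp.add_apply, Finsupp.add_apply, vexp_apply2, vexp_apply3]
    have := bv_le f
    simp only [Multiset.card_cons]
    omega

-- the toric/determinantal ideal
def Jdet (k : Type) [Field k] : Ideal (MvPolynomial (Fin 12) k) :=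
  Ideal.span {q : MvPolynomial (Fin 12) k |
    ∃ (i i' j j' : Fin 4), q = X (ω i j) * X (ω i' j') - X (ω i j') * X (ω i' j)}

lemma stp_sub_mem {m₁ m₂ : Multiset (Fin 12)} (h : Stp m₁ m₂) :
    P k m₁ - P k m₂ ∈ Jdet k := by
  obtain ⟨r, i, i', j, j', rfl, rfl⟩ := h
  have hgen : (X (ω i j) * X (ω i' j') - X (ω i j') * X (ω i' j) : MvPolynomial (Fin 12) k)
      ∈ Jdet k := Ideal.subset_span ⟨i, i', j, j', rfl⟩
  have : P k (ω i j ::ₘ ω i' j' ::ₘ r) - P k (ω i j' ::ₘ ω i' j ::ₘ r) =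
      (X (ω i j) * X (ω i' j') - X (ω i j') * X (ω i' j)) * P k r := by
    simp only [P_cons]; ring
  rw [this]
  exact Ideal.mul_mem_right _ _ hgen

lemma eqv_sub_mem {m₁ m₂ : Multiset (Fin 12)} (h : Eqv m₁ m₂) :
    P k m₁ - P k m₂ ∈ Jdet k := by
  induction h with
  | refl => simp
  | tail hab hbc ih =>
    have := Ideal.add_mem _ ih (stp_sub_mem hbc)
    simpa using this

lemma P_toMultiset (u : Fin 12 →₀ ℕ) : P k u.toMultiset = monomial u 1 := by
  induction u using Finsupp.induction with
  | zero => simp [P_zero]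
  | single_add a n f _ _ ih =>
    rw [Finsupp.toMultiset_add, Finsupp.toMultiset_single, Multiset.nsmul_singleton]
    show (Multiset.map X (Multiset.replicate n a + f.toMultiset)).prod = _
    rw [Multiset.map_add, Multiset.prod_add, Multiset.map_replicate, Multiset.prod_replicate]
    show (X a) ^ n * P k f.toMultiset = _
    rw [ih, X_pow_eq_monomial, monomial_mul, one_mul]

def canW (w : Fin 6 →₀ ℕ) : Multiset (Fin 12) := can (w 2 + w 3) (w 1) (w 3) (w 5)

def ψ (k : Type) [Field k] : MvPolynomial (Fin 6) k →ₗ[k] MvPolynomial (Fin 12) k :=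
  (basisMonomials (Fin 6) k).constr ℕ fun w => P k (canW w)

lemma ψ_monomial (w : Fin 6 →₀ ℕ) : ψ k (monomial w 1) = P k (canW w) := by
  have : (monomial w (1:k)) = basisMonomials (Fin 6) k w := by
    rw [coe_basisMonomials]
  rw [this, ψ, Module.Basis.constr_basis]

lemma main1 (f : MvPolynomial (Fin 12) k) : f - ψ k (embed211 k f) ∈ Jdet k := by
  induction f using MvPolynomial.induction_on' with
  | monomial u c =>
    have hμ : monomial u (1:k) = P k u.toMultiset := (P_toMultiset u).symm
    have hφ : embed211 k (monomial u c) = monomial (Vsum u.toMultiset) c := by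
      have : (monomial u c : MvPolynomial (Fin 12) k) = c • monomial u 1 := by
        rw [smul_monomial, smul_eq_mul, mul_one]
      rw [this, map_smul, hμ, aeval_P, smul_monomial, smul_eq_mul, mul_one]
    have hcan : canW (Vsum u.toMultiset) = can (Multiset.card u.toMultiset)
        (As u.toMultiset) (Bs u.toMultiset) (Cs u.toMultiset) := by
      rw [canW, Vsum_card, Vsum_1, Vsum_3, Vsum_5]
    have hre : Eqv u.toMultiset (canW (Vsum u.toMultiset)) := by
      rw [hcan]; exact reach _ _ rfl
    have hmem : P k u.toMultiset - P k (canW (Vsum u.toMultiset)) ∈ Jdet k :=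
      eqv_sub_mem hre
    have hψ : ψ k (embed211 k (monomial u c)) = c • P k (canW (Vsum u.toMultiset)) := by
      rw [hφ]
      have : (monomial (Vsum u.toMultiset) c : MvPolynomial (Fin 6) k) =
          c • monomial (Vsum u.toMultiset) 1 := by rw [smul_monomial, smul_eq_mul, mul_one]
      rw [this, map_smul, ψ_monomial]
    rw [hψ]
    have : (monomial u c : MvPolynomial (Fin 12) k) - c • P k (canW (Vsum u.toMultiset)) =
        c • (P k u.toMultiset - P k (canW (Vsum u.toMultiset))) := by
      rw [smul_sub, ← hμ, smul_monomial, smul_eq_mul, mul_one]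
    rw [this, smul_eq_C_mul]
    exact Ideal.mul_mem_left _ _ hmem
  | add p q hp hq =>
    have : p + q - ψ k (embed211 k (p + q)) =
        (p - ψ k (embed211 k p)) + (q - ψ k (embed211 k q)) := by
      rw [map_add, map_add]; ring
    rw [this]
    exact Ideal.add_mem _ hp hq

lemma gen_in_ker (i i' j j' : Fin 4) :
    embed211 k (X (ω i j) * X (ω i' j') - X (ω i j') * X (ω i' j)) = 0 := by
  rw [map_sub, map_mul, map_mul]
  simp only [embed211, aeval_X]
  rw [mon211_eq, mon211_eq, mon211_eq, mon211_eq, monomial_mul, monomial_mul,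
    vexp_swap i i' j j']
  ring

theorem ker_eq_Jdet : RingHom.ker (embed211 k).toRingHom = Jdet k := by
  apply le_antisymm
  · intro f hf
    have h0 : embed211 k f = 0 := hf
    have := main1 (k := k) f
    rwa [h0, map_zero, sub_zero] at this
  · rw [Jdet, Ideal.span_le]
    rintro q ⟨i, i', j, j', rfl⟩
    exact gen_in_ker i i' j j'

/-- The toric ideal of the embedding of `X = P¹ × P¹ × P¹` in `P¹¹` by
the twelve monomials of multidegree `(2,1,1)` is generated by the `2 × 2` minors of the
matrix `[[y₀,y₁,y₄,y₅],[y₂,y₃,y₆,y₇],[y₄,y₅,y₈,y₉],[y₆,y₇,y₁₀,y₁₁]]`; in particular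
`O_X(2,1,1)` is determinantally presented. -/
theorem P1P1P1_211_detPresented (k : Type) [Field k] :
    RingHom.ker (embed211 k).toRingHom =
      Ideal.span {q : MvPolynomial (Fin 12) k |
        ∃ (i i' j j' : Fin 4),
          q = X (omegaIdx i j) * X (omegaIdx i' j') -
              X (omegaIdx i j') * X (omegaIdx i' j)} := by
  simp only [omega_eq]
  exact ker_eq_Jdet

end
end
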